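/- (Algebraic core of Proposition 3.8, nilpotent_reducibility_homdis.) Let G be an abelian group, let p_1, …, p_m be distinct primes and r_1, …, r_m positive integers, and set B = ⊕_{j=1}^m ℤ/p_j^{r_j}ℤ. Assume that for no j is ℤ/p_j^{r_j}ℤ a direct summand of G. Then for every bijective additive endomorphism f of G × B, both block components f_GG and f_BB are automorphisms of G and B respectively. -/
import Mathlib

-- ===== aux from /tmp/aux.lean will be pasted here later; for now import by copy =====

lemma zmod_endo_apply {n : ℕ} [NeZero n] (φ : ZMod n →+ ZMod n) (x : ZMod n) :
    φ x = φ 1 * x := by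
  conv_lhs => rw [← ZMod.natCast_rightInverse x]
  rw [show ((x.val : ℕ) : ZMod n) = (x.val : ℕ) • (1 : ZMod n) by simp,
    map_nsmul, nsmul_eq_mul]
  rw [ZMod.natCast_rightInverse x]
  ring

lemma zmod_hom_coprime_zero {a b : ℕ} [NeZero a] [NeZero b] (hab : Nat.Coprime a b)
    (φ : ZMod a →+ ZMod b) (x : ZMod a) : φ x = 0 := by
  have h1 : φ 1 = 0 := by
    have hmul : (a : ZMod b) * φ 1 = 0 := by
      rw [show (a : ZMod b) * φ 1 = a • φ 1 by simp [nsmul_eq_mul], ← map_nsmul]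
      simp [show (a : ℕ) • (1 : ZMod a) = 0 by simp [nsmul_eq_mul]]
    obtain ⟨w, hw⟩ := (ZMod.isUnit_iff_coprime a b).mpr hab
    calc φ 1 = (↑w⁻¹ * (a : ZMod b)) * φ 1 := by rw [← hw, w.inv_mul, one_mul]
    _ = ↑w⁻¹ * ((a : ZMod b) * φ 1) := mul_assoc ..
    _ = 0 := by rw [hmul, mul_zero]
  conv_lhs => rw [← ZMod.natCast_rightInverse x]
  rw [show ((x.val : ℕ) : ZMod a) = (x.val : ℕ) • (1 : ZMod a) by simp [nsmul_eq_mul],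
    map_nsmul, h1, smul_zero]

lemma zmod_isUnit_iff_not_dvd {p r : ℕ} (hp : p.Prime) (hr : 1 ≤ r)
    [NeZero (p ^ r)] (x : ZMod (p ^ r)) : IsUnit x ↔ ¬ p ∣ x.val := by
  have hx : ((x.val : ℕ) : ZMod (p ^ r)) = x := ZMod.natCast_rightInverse x
  rw [show IsUnit x ↔ IsUnit ((x.val : ℕ) : ZMod (p ^ r)) by rw [hx],
    ZMod.isUnit_iff_coprime, Nat.coprime_pow_right_iff (by omega),
    Nat.coprime_comm, Nat.Prime.coprime_iff_not_dvd hp]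

lemma zmod_one_sub_nonunit {p r : ℕ} (hp : p.Prime) (hr : 1 ≤ r)
    {u : ZMod (p ^ r)} (hu : ¬ IsUnit u) : IsUnit (1 - u) := by
  haveI : NeZero (p ^ r) := ⟨pow_ne_zero _ hp.pos.ne'⟩
  rw [zmod_isUnit_iff_not_dvd hp hr] at hu ⊢
  push_neg at hu
  intro hdvd
  have hsum : (((1 - u).val + u.val : ℕ) : ZMod (p ^ r)) = ((1 : ℕ) : ZMod (p ^ r)) := by
    push_cast
    rw [ZMod.natCast_rightInverse, ZMod.natCast_rightInverse]; ring
  have hmod : ((1 - u).val + u.val) ≡ 1 [MOD p ^ r] :=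
    (ZMod.natCast_eq_natCast_iff _ _ _).mp hsum
  have hmodp : ((1 - u).val + u.val) ≡ 1 [MOD p] :=
    hmod.of_dvd (dvd_pow_self p (by omega))
  have hps : p ∣ ((1 - u).val + u.val) := Nat.dvd_add hdvd hu
  have h0 : ((1 - u).val + u.val) % p = 0 := Nat.dvd_iff_mod_eq_zero.mp hps
  have h1 : (1 : ℕ) % p = 1 := Nat.mod_eq_of_lt hp.one_lt
  unfold Nat.ModEq at hmodp
  omega

universe v

/-- A retract `ZMod n` of `G` is a direct summand. -/
lemma retract_summand {G : Type v} [AddCommGroup G] (n : ℕ)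
    (ι : ZMod n →+ G) (ρ : G →+ ZMod n) (h : ∀ x, ρ (ι x) = x) :
    ∃ (K : Type v) (_ : AddCommGroup K), Nonempty (G ≃+ ZMod n × K) := by
  refine ⟨ρ.ker, inferInstance, ⟨?_⟩⟩
  refine
  { toFun := fun g => (ρ g, ⟨g - ι (ρ g), ?_⟩)
    invFun := fun z => ι z.1 + z.2.1
    left_inv := ?_
    right_inv := ?_
    map_add' := ?_ }
  · simp [AddMonoidHom.mem_ker, h]
  · intro g; simp
  · rintro ⟨x, ⟨k, hk⟩⟩
    simp only [AddMonoidHom.mem_ker] at hk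
    simp [hk, h, Prod.ext_iff, Subtype.ext_iff]
  · intro g₁ g₂
    simp [Prod.ext_iff, Subtype.ext_iff]
    abel

section Diag

variable {m : ℕ} {n : Fin m → ℕ} [∀ j, NeZero (n j)]

lemma diag_apply (ψ : (∀ j, ZMod (n j)) →+ (∀ j, ZMod (n j)))
    (hoff : ∀ j k, j ≠ k → ∀ t, ψ (Pi.single k t) j = 0)
    (x : ∀ j, ZMod (n j)) (j : Fin m) :
    ψ x j = ψ (Pi.single j (x j)) j := by
  conv_lhs => rw [← Finset.univ_sum_single x]
  rw [map_sum]
  rw [Finset.sum_apply]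
  rw [Finset.sum_eq_single j]
  · intro k _ hk; exact hoff j k (Ne.symm hk) (x k)
  · intro hj; exact absurd (Finset.mem_univ j) hj

lemma diag_bijective (ψ : (∀ j, ZMod (n j)) →+ (∀ j, ZMod (n j)))
    (hoff : ∀ j k, j ≠ k → ∀ t, ψ (Pi.single k t) j = 0)
    (hdiag : ∀ j, Function.Bijective (fun t : ZMod (n j) => ψ (Pi.single j t) j)) :
    Function.Bijective ψ := by
  constructor
  · intro x y hxy
    funext j
    apply (hdiag j).1
    show ψ (Pi.single j (x j)) j = ψ (Pi.single j (y j)) j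
    rw [← diag_apply ψ hoff, ← diag_apply ψ hoff, hxy]
  · intro y
    choose t ht using fun j => (hdiag j).2 (y j)
    exact ⟨t, funext fun j => by rw [diag_apply ψ hoff]; exact ht j⟩


end Diag

lemma unit_mul_bijective {R : Type*} [CommRing R] {c : R} (hc : IsUnit c) :
    Function.Bijective (fun t : R => c * t) := by
  obtain ⟨w, rfl⟩ := hc
  constructor
  · intro t₁ t₂ h
    simpa using congrArg (fun z => (↑w⁻¹ : R) * z) h
  · intro y
    exact ⟨↑w⁻¹ * y, by simp [← mul_assoc]⟩

/-- The block components of an additive endomorphism of `G × B`. -/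
def blockGG {G B : Type*} [AddCommGroup G] [AddCommGroup B] (f : G × B →+ G × B) : G →+ G :=
  (AddMonoidHom.fst G B).comp (f.comp (AddMonoidHom.inl G B))

def blockBB {G B : Type*} [AddCommGroup G] [AddCommGroup B] (f : G × B →+ G × B) : B →+ B :=
  (AddMonoidHom.snd G B).comp (f.comp (AddMonoidHom.inr G B))

def blockGB {G B : Type*} [AddCommGroup G] [AddCommGroup B] (f : G × B →+ G × B) : B →+ G :=
  (AddMonoidHom.fst G B).comp (f.comp (AddMonoidHom.inr G B))

def blockBG {G B : Type*} [AddCommGroup G] [AddCommGroup B] (f : G × B →+ G × B) : G →+ B :=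
  (AddMonoidHom.snd G B).comp (f.comp (AddMonoidHom.inl G B))

lemma block_apply {G B : Type*} [AddCommGroup G] [AddCommGroup B] (f : G × B →+ G × B)
    (x : G) (y : B) :
    f (x, y) = (blockGG f x + blockGB f y, blockBG f x + blockBB f y) := by
  have h : (x, y) = ((x, 0) + (0, y) : G × B) := by simp
  rw [h, map_add]
  rfl

/-- Algebraic core of Proposition 3.8 (`nilpotent_reducibility_homdis`): let
`B = ⊕_j ℤ/p_j^{r_j}ℤ` for distinct primes `p_j` and `r_j ≥ 1`, and let `G` be an abelian
group having no `ℤ/p_j^{r_j}ℤ` as a direct summand.  Then for every bijective additive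
endomorphism `f` of `G × B`, both diagonal blocks `f_GG` and `f_BB` are automorphisms. -/
theorem blocks_bijective_of_no_summand.{u} {G : Type u} [AddCommGroup G]
    {m : ℕ} (hm : 1 ≤ m)
    (p : Fin m → ℕ) (hp : ∀ j, (p j).Prime) (hinj : Function.Injective p)
    (r : Fin m → ℕ) (hr : ∀ j, 1 ≤ r j)
    (hG : ∀ j : Fin m,
      ¬ ∃ (K : Type u) (_ : AddCommGroup K), Nonempty (G ≃+ ZMod (p j ^ r j) × K))
    (f : G × (∀ j, ZMod (p j ^ r j)) →+ G × ∀ j, ZMod (p j ^ r j))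
    (hf : Function.Bijective f) :
    Function.Bijective (blockGG f) ∧ Function.Bijective (blockBB f) := by
  classical
  haveI : ∀ j, NeZero (p j ^ r j) := fun j => ⟨pow_ne_zero _ (hp j).pos.ne'⟩
  have hcop : ∀ j k : Fin m, j ≠ k → Nat.Coprime (p k ^ r k) (p j ^ r j) := by
    intro j k hjk
    exact ((Nat.coprime_primes (hp k) (hp j)).mpr (fun h => hjk (hinj h).symm)).pow _ _
  -- the no-summand hypothesis in retract form
  have hretract : ∀ (j : Fin m) (ι : ZMod (p j ^ r j) →+ G) (ρ : G →+ ZMod (p j ^ r j)),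
      ¬ IsUnit (ρ (ι 1)) := by
    intro j ι ρ hv
    obtain ⟨w, hw⟩ := hv
    apply hG j
    refine retract_summand (p j ^ r j) ι
      ((AddMonoidHom.mulLeft (↑w⁻¹ : ZMod (p j ^ r j))).comp ρ) (fun x => ?_)
    have := zmod_endo_apply (ρ.comp ι) x
    simp only [AddMonoidHom.comp_apply] at this ⊢
    show (↑w⁻¹ : ZMod (p j ^ r j)) * ρ (ι x) = x
    rw [this, ← hw, ← mul_assoc, w.inv_mul, one_mul]
  -- inverse of f
  set e := AddEquiv.ofBijective f hf with he
  set g := e.symm.toAddMonoidHom with hgdef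
  have hgf : ∀ z, g (f z) = z := fun z => e.symm_apply_apply z
  have hfg : ∀ z, f (g z) = z := fun z => e.apply_symm_apply z
  -- Step 1 : blockBB f is bijective
  have hoffd : ∀ (ψ : (∀ j, ZMod (p j ^ r j)) →+ (∀ j, ZMod (p j ^ r j)))
      (j k : Fin m), j ≠ k → ∀ t, ψ (Pi.single k t) j = 0 := by
    intro ψ j k hjk t
    exact zmod_hom_coprime_zero (hcop j k hjk)
      ((Pi.evalAddMonoidHom _ j).comp (ψ.comp
        (AddMonoidHom.single (fun i => ZMod (p i ^ r i)) k))) t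
  have hdunit : ∀ j : Fin m, IsUnit ((blockBB f) (Pi.single j 1) j) := by
    intro j
    by_contra hu
    set u := (blockBB f) (Pi.single j 1) j with hudef
    -- d (single j 1) = single j u
    have hdsingle : (blockBB f) (Pi.single j 1) = Pi.single j u := by
      funext k
      by_cases hk : k = j
      · subst hk; simp [hudef]
      · rw [hoffd (blockBB f) k j (by exact hk), Pi.single_eq_of_ne hk]
    -- key identity from g ∘ f = id
    have hkey : (blockBG g) ((blockGB f) (Pi.single j 1)) j
        + (blockBB g) (Pi.single j u) j = 1 := by
      have h1 : g (f (0, Pi.single j 1)) = (0, Pi.single j 1) := hgf _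
      rw [block_apply f, map_zero, map_zero, zero_add, zero_add,
        block_apply g, hdsingle] at h1
      have := congrArg Prod.snd h1
      simpa using congrFun this j
    -- second term is u' * u with u' = component of g
    set u' := (blockBB g) (Pi.single j 1) j with hu'def
    have h2 : (blockBB g) (Pi.single j u) j = u' * u := by
      have := zmod_endo_apply ((Pi.evalAddMonoidHom _ j).comp ((blockBB g).comp
        (AddMonoidHom.single (fun i => ZMod (p i ^ r i)) j))) u
      simpa using this
    rw [h2] at hkey
    have hnu : ¬ IsUnit (u' * u) := fun h => hu (isUnit_of_mul_isUnit_left (by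
      rwa [mul_comm] at h))
    have hv : IsUnit ((blockBG g) ((blockGB f) (Pi.single j 1)) j) := by
      have : (blockBG g) ((blockGB f) (Pi.single j 1)) j = 1 - u' * u := by
        linear_combination hkey
      rw [this]
      exact zmod_one_sub_nonunit (hp j) (hr j) hnu
    exact hretract j ((blockGB f).comp (AddMonoidHom.single (fun i => ZMod (p i ^ r i)) j))
      ((Pi.evalAddMonoidHom _ j).comp (blockBG g)) (by simpa using hv)
  have hd : Function.Bijective (blockBB f) := by
    apply diag_bijective _ (hoffd (blockBB f))
    intro j
    have hψ : ∀ t, (blockBB f) (Pi.single j t) j = (blockBB f) (Pi.single j 1) j * t := by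
      intro t
      have := zmod_endo_apply ((Pi.evalAddMonoidHom _ j).comp ((blockBB f).comp
        (AddMonoidHom.single (fun i => ZMod (p i ^ r i)) j))) t
      simpa using this
    have heq : (fun t : ZMod (p j ^ r j) => (blockBB f) (Pi.single j t) j)
        = fun t => (blockBB f) (Pi.single j 1) j * t := funext hψ
    rw [heq]
    exact unit_mul_bijective (hdunit j)
  -- Step 2 : the Schur complement S is bijective
  set dinv := (AddEquiv.ofBijective (blockBB f) hd).symm with hdinv
  have hdd : ∀ y, (blockBB f) (dinv y) = y :=
    fun y => (AddEquiv.ofBijective (blockBB f) hd).apply_symm_apply y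
  have hdd' : ∀ y, dinv ((blockBB f) y) = y :=
    fun y => (AddEquiv.ofBijective (blockBB f) hd).symm_apply_apply y
  set S : G →+ G := blockGG f - (blockGB f).comp (dinv.toAddMonoidHom.comp (blockBG f))
    with hSdef
  have hSapp : ∀ x, S x = blockGG f x - blockGB f (dinv (blockBG f x)) := fun x => rfl
  have hS : Function.Bijective S := by
    constructor
    · intro x₁ x₂ hx
      have hx' : S (x₁ - x₂) = 0 := by rw [map_sub, hx, sub_self]
      have h1 : blockGG f (x₁ - x₂) - blockGB f (dinv (blockBG f (x₁ - x₂))) = 0 := by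
        rw [← hSapp]; exact hx'
      have hz : f (x₁ - x₂, - dinv (blockBG f (x₁ - x₂))) = 0 := by
        rw [block_apply, map_neg, map_neg, hdd]
        rw [Prod.ext_iff]
        refine ⟨?_, ?_⟩
        · simpa [sub_eq_add_neg] using h1
        · simp
      have h0 : f (x₁ - x₂, -dinv ((blockBG f) (x₁ - x₂))) = f 0 := by
        rw [hz, map_zero]
      have h0' := hf.1 h0
      have := congrArg Prod.fst h0'
      simpa [sub_eq_zero] using this
    · intro u0
      obtain ⟨⟨x, z⟩, hz⟩ := hf.2 (u0, 0)
      rw [block_apply] at hz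
      have h1 : blockGG f x + blockGB f z = u0 := congrArg Prod.fst hz
      have h2 : blockBG f x + blockBB f z = 0 := congrArg Prod.snd hz
      have hzval : z = - dinv (blockBG f x) := by
        have : blockBB f z = - blockBG f x := by linear_combination (norm := abel) h2
        rw [← hdd' z, this, map_neg]
      refine ⟨x, ?_⟩
      rw [hSapp, ← h1, hzval, map_neg]
      abel
  -- Step 3 : blockGG f is bijective
  set Se := AddEquiv.ofBijective S hS with hSe
  set β : (∀ j, ZMod (p j ^ r j)) →+ G := Se.symm.toAddMonoidHom.comp (blockGB f) with hβ
  set γ : G →+ (∀ j, ZMod (p j ^ r j)) := dinv.toAddMonoidHom.comp (blockBG f) with hγ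
  have hSβ : ∀ y, S (β y) = blockGB f y := fun y => Se.apply_symm_apply _
  have ha_eq : ∀ x, blockGG f x = S (x + β (γ x)) := by
    intro x
    rw [map_add, hSβ, hSapp]
    show blockGG f x
      = blockGG f x - blockGB f (dinv (blockBG f x)) + blockGB f (dinv (blockBG f x))
    abel
  set ψ : (∀ j, ZMod (p j ^ r j)) →+ (∀ j, ZMod (p j ^ r j)) :=
    AddMonoidHom.id _ + γ.comp β with hψdef
  have hψapp : ∀ y, ψ y = y + γ (β y) := fun y => rfl
  have hoffψ : ∀ j k, j ≠ k → ∀ t, ψ (Pi.single k t) j = 0 := by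
    intro j k hjk t
    rw [hψapp]
    have h1 : (Pi.single k t : ∀ i, ZMod (p i ^ r i)) j = 0 := by
      rw [Pi.single_eq_of_ne hjk]
    have h2 : γ (β (Pi.single k t)) j = 0 := by
      have := zmod_hom_coprime_zero (hcop j k hjk)
        ((Pi.evalAddMonoidHom _ j).comp ((γ.comp β).comp
          (AddMonoidHom.single (fun i => ZMod (p i ^ r i)) k))) t
      simpa using this
    rw [Pi.add_apply, h1, h2, add_zero]
  have hψunit : ∀ j, IsUnit (ψ (Pi.single j 1) j) := by
    intro j
    by_contra hu
    set w0 := γ (β (Pi.single j 1)) j with hw0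
    have hval : ψ (Pi.single j 1) j = 1 + w0 := by
      rw [hψapp, Pi.add_apply, Pi.single_eq_same]
    have hw0u : IsUnit w0 := by
      have h3 : IsUnit (1 - (1 + w0)) := by
        apply zmod_one_sub_nonunit (hp j) (hr j)
        rw [← hval]
        exact hu
      have h4 : -(1 - (1 + w0)) = w0 := by ring
      have := h3.neg
      rwa [h4] at this
    exact hretract j (β.comp (AddMonoidHom.single (fun i => ZMod (p i ^ r i)) j))
      ((Pi.evalAddMonoidHom _ j).comp γ) hw0u
  have hψbij : Function.Bijective ψ := by
    apply diag_bijective ψ hoffψ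
    intro j
    have hmul : ∀ t, ψ (Pi.single j t) j = ψ (Pi.single j 1) j * t := by
      intro t
      have := zmod_endo_apply ((Pi.evalAddMonoidHom _ j).comp (ψ.comp
        (AddMonoidHom.single (fun i => ZMod (p i ^ r i)) j))) t
      simpa using this
    have heq : (fun t : ZMod (p j ^ r j) => ψ (Pi.single j t) j)
        = fun t => ψ (Pi.single j 1) j * t := funext hmul
    rw [heq]
    exact unit_mul_bijective (hψunit j)
  set ψinv := (AddEquiv.ofBijective ψ hψbij).symm with hψinv
  have hψψ : ∀ y, ψ (ψinv y) = y :=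
    fun y => (AddEquiv.ofBijective ψ hψbij).apply_symm_apply y
  have hψψ' : ∀ y, ψinv (ψ y) = y :=
    fun y => (AddEquiv.ofBijective ψ hψbij).symm_apply_apply y
  have hθ : Function.Bijective (fun x : G => x + β (γ x)) := by
    rw [Function.bijective_iff_has_inverse]
    refine ⟨fun x => x - β (ψinv (γ x)), ?_, ?_⟩
    · intro x
      show (x + β (γ x)) - β (ψinv (γ (x + β (γ x)))) = x
      have h1 : γ (x + β (γ x)) = ψ (γ x) := by rw [map_add, hψapp]
      rw [h1, hψψ']
      abel
    · intro x
      show (x - β (ψinv (γ x))) + β (γ (x - β (ψinv (γ x)))) = x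
      have h1 : γ (x - β (ψinv (γ x))) = ψinv (γ x) := by
        rw [map_sub]
        have h2 : γ (β (ψinv (γ x))) = ψ (ψinv (γ x)) - ψinv (γ x) := by
          rw [hψapp]; abel
        rw [h2, hψψ]
        abel
      rw [h1]
      abel
  have ha : Function.Bijective (blockGG f) := by
    have heq : ⇑(blockGG f) = S ∘ (fun x : G => x + β (γ x)) := funext fun x => ha_eq x
    rw [heq]
    exact hS.comp hθ
  exact ⟨ha, hd⟩
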